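/- arXiv:quant-ph/0509100 — 2 statements merged into one kernel-verified Lean document; each statement's English description precedes it below -/
import Mathlib

section
/- If Λ is a CPTP map taking density operators ρ and ρ' both to pure states, then ‖Λ[ρ] − Λ[ρ']‖_tr ≤ D(ρ,ρ'), where D(ρ,ρ') is the worst-case distinguishability of ρ and ρ'. -/
open Matrix Kronecker BigOperators
open scoped ComplexOrder

/-- Trace distance/norm with factor 1/2: `‖A‖ = ½ tr √(AᴴA)`. -/
noncomputable def trNorm {m : Type*} [Fintype m] [DecidableEq m] (A : Matrix m m ℂ) : ℝ :=
  (1 / 2) * (((Matrix.posSemidef_conjTranspose_mul_self A).1.eigenvectorUnitary.1 *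
      diagonal (((↑) : ℝ → ℂ) ∘ (√·) ∘ (Matrix.posSemidef_conjTranspose_mul_self A).1.eigenvalues) *
      (star (Matrix.posSemidef_conjTranspose_mul_self A).1.eigenvectorUnitary : Matrix m m ℂ)).trace).re

/-- A density operator: positive semidefinite with unit trace. -/
def IsDensity {m : Type*} [Fintype m] (ρ : Matrix m m ℂ) : Prop :=
  ρ.PosSemidef ∧ ρ.trace = 1

/-- A pure state: a density operator that is a (rank-one) projector. -/
def IsPureState {m : Type*} [Fintype m] (ρ : Matrix m m ℂ) : Prop :=
  IsDensity ρ ∧ ρ * ρ = ρ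

/-- Completely positive trace-preserving map, via a Kraus representation. -/
def IsCPTP {m p : Type*} [Fintype m] [DecidableEq m] [Fintype p]
    (Λ : Matrix m m ℂ →ₗ[ℂ] Matrix p p ℂ) : Prop :=
  ∃ (ι : Type) (s : Finset ι) (K : ι → Matrix p m ℂ),
    (∀ ρ, Λ ρ = ∑ i ∈ s, K i * ρ * (K i)ᴴ) ∧ ∑ i ∈ s, (K i)ᴴ * K i = 1

/-- Partial trace over the second (auxiliary) tensor factor. -/
noncomputable def ptraceB {m b : Type*} [Fintype b] (ρ : Matrix (m × b) (m × b) ℂ) :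
    Matrix m m ℂ :=
  Matrix.of fun i j => ∑ k : b, ρ (i, k) (j, k)

/-- The projector `|χ⟩⟨χ|` onto the vector `χ`. -/
noncomputable def pureProj {m : Type*} (χ : m → ℂ) : Matrix m m ℂ :=
  Matrix.vecMulVec χ (star χ)

/-- `χ` lies in the range of `ρ`. -/
def inRange {m : Type*} [Fintype m] (ρ : Matrix m m ℂ) (χ : m → ℂ) : Prop :=
  ∃ v, ρ *ᵥ v = χ

/-- Worst-case distinguishability: infimum of trace distances of pure states
taken from the ranges of `ρ` and `ρ'`. -/
noncomputable def wcd {m : Type*} [Fintype m] [DecidableEq m] (ρ ρ' : Matrix m m ℂ) : ℝ :=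
  sInf { d : ℝ | ∃ χ χ' : m → ℂ, inRange ρ χ ∧ inRange ρ' χ' ∧
    star χ ⬝ᵥ χ = 1 ∧ star χ' ⬝ᵥ χ' = 1 ∧ d = trNorm (pureProj χ - pureProj χ') }

set_option linter.unusedSectionVars false

namespace QProof

variable {m : Type*} [Fintype m] [DecidableEq m]

noncomputable def conjU {Y : Matrix m m ℂ} (hY : Y.IsHermitian) (f : m → ℝ) : Matrix m m ℂ :=
  (hY.eigenvectorUnitary : Matrix m m ℂ) * diagonal ((↑) ∘ f) *
    (star (hY.eigenvectorUnitary : Matrix m m ℂ))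

variable {Y : Matrix m m ℂ}

lemma conjU_posSemidef (hY : Y.IsHermitian) {f : m → ℝ}
    (hf : ∀ i, 0 ≤ f i) : (conjU hY f).PosSemidef := by
  have hd : Matrix.PosSemidef (diagonal ((↑) ∘ f) : Matrix m m ℂ) := by
    refine Matrix.PosSemidef.diagonal fun i => ?_
    simpa using Complex.zero_le_real.mpr (hf i)
  simpa [conjU, Matrix.star_eq_conjTranspose] using hd.mul_mul_conjTranspose_same (hY.eigenvectorUnitary : Matrix m m ℂ)

lemma conjU_mul (hY : Y.IsHermitian) (f g : m → ℝ) :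
    conjU hY f * conjU hY g = conjU hY (f * g) := by
  have h1 : (star (hY.eigenvectorUnitary : Matrix m m ℂ)) *
      (hY.eigenvectorUnitary : Matrix m m ℂ) = 1 :=
    Matrix.mem_unitaryGroup_iff'.mp hY.eigenvectorUnitary.2
  simp only [conjU, Matrix.mul_assoc]
  rw [← Matrix.mul_assoc (star (hY.eigenvectorUnitary : Matrix m m ℂ)) _ _, h1, Matrix.one_mul,
    ← Matrix.mul_assoc (diagonal (Complex.ofReal ∘ f)) (diagonal (Complex.ofReal ∘ g)) _,
    diagonal_mul_diagonal]
  congr 2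
  ext i j
  by_cases h : i = j <;> simp [diagonal, h]

lemma conjU_trace (hY : Y.IsHermitian) (f : m → ℝ) :
    (conjU hY f).trace = ((∑ i, f i : ℝ) : ℂ) := by
  have h1 : (star (hY.eigenvectorUnitary : Matrix m m ℂ)) *
      (hY.eigenvectorUnitary : Matrix m m ℂ) = 1 :=
    Matrix.mem_unitaryGroup_iff'.mp hY.eigenvectorUnitary.2
  rw [conjU, Matrix.trace_mul_cycle, h1, Matrix.one_mul, trace_diagonal]
  push_cast
  rfl

lemma conjU_spectral (hY : Y.IsHermitian) : Y = conjU hY hY.eigenvalues := hY.spectral_theorem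

lemma conjU_sub (hY : Y.IsHermitian) (f g : m → ℝ) :
    conjU hY f - conjU hY g = conjU hY (f - g) := by
  simp only [conjU, ← Matrix.sub_mul, ← Matrix.mul_sub, ← diagonal_sub]
  congr 2
  ext i j
  by_cases h : i = j <;> simp [diagonal, h]

lemma conjU_injective (hY : Y.IsHermitian) {f g : m → ℝ}
    (h : conjU hY f = conjU hY g) : f = g := by
  have h1 : (star (hY.eigenvectorUnitary : Matrix m m ℂ)) *
      (hY.eigenvectorUnitary : Matrix m m ℂ) = 1 :=
    Matrix.mem_unitaryGroup_iff'.mp hY.eigenvectorUnitary.2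
  have h2 : ∀ f : m → ℝ, (star (hY.eigenvectorUnitary : Matrix m m ℂ)) * conjU hY f *
      (hY.eigenvectorUnitary : Matrix m m ℂ) = diagonal ((↑) ∘ f) := by
    intro f
    rw [conjU, ← Matrix.mul_assoc, ← Matrix.mul_assoc, h1, Matrix.one_mul,
      Matrix.mul_assoc, h1, Matrix.mul_one]
  have h3 := (h2 f).symm.trans (by rw [h, h2 g])
  funext i
  have := Matrix.ext_iff.mpr h3 i i
  simpa [diagonal] using this

lemma trNorm_eq_sum_abs (hY : Y.IsHermitian) :
    trNorm Y = 1 / 2 * ∑ i, |hY.eigenvalues i| := by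
  have habs : (fun i => |hY.eigenvalues i|) * (fun i => |hY.eigenvalues i|)
      = hY.eigenvalues * hY.eigenvalues := funext fun i => abs_mul_abs_self _
  have hsq : conjU hY (fun i => |hY.eigenvalues i|) ^ 2 = Yᴴ * Y := by
    rw [pow_two, conjU_mul, habs, ← conjU_mul, ← conjU_spectral, hY.eq]
  have hpsd := conjU_posSemidef hY (f := fun i => |hY.eigenvalues i|) fun i => abs_nonneg _
  have hsa := hY.isSelfAdjoint
  have key : trNorm Y = 1 / 2 * (cfc Real.sqrt (Yᴴ * Y)).trace.re := by
    rw [trNorm, (Matrix.posSemidef_conjTranspose_mul_self Y).1.cfc_eq]; rfl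
  have e2 : cfc Real.sqrt (Yᴴ * Y) = conjU hY (fun i => |hY.eigenvalues i|) := by
    have hYY : Yᴴ * Y = cfc (fun x : ℝ => x ^ 2) Y := by
      rw [cfc_pow_id Y 2, hY.eq, pow_two]
    rw [hYY, ← cfc_comp Real.sqrt (fun x : ℝ => x ^ 2) Y, hY.cfc_eq]
    have hf : (Real.sqrt ∘ fun x : ℝ => x ^ 2) = fun x => |x| := by
      funext x; simp [Real.sqrt_sq_eq_abs]
    rw [hf]; rfl
  rw [key, e2, conjU_trace]
  simp

lemma sum_quadform_eq_trace (hY : Y.IsHermitian) (M : Matrix m m ℂ) :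
    ∑ i, dotProduct (star ⇑(hY.eigenvectorBasis i)) (M *ᵥ ⇑(hY.eigenvectorBasis i))
      = M.trace := by
  have h1 : (hY.eigenvectorUnitary : Matrix m m ℂ) *
      star (hY.eigenvectorUnitary : Matrix m m ℂ) = 1 :=
    Matrix.mem_unitaryGroup_iff.mp hY.eigenvectorUnitary.2
  have key : ∀ i, dotProduct (star ⇑(hY.eigenvectorBasis i)) (M *ᵥ ⇑(hY.eigenvectorBasis i))
      = (star (hY.eigenvectorUnitary : Matrix m m ℂ) *
        (M * (hY.eigenvectorUnitary : Matrix m m ℂ))) i i := by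
    intro i
    simp only [Matrix.mul_apply, Matrix.star_apply, dotProduct, mulVec, dotProduct,
      Pi.star_apply, Matrix.IsHermitian.eigenvectorUnitary_apply, Finset.mul_sum]
  rw [Finset.sum_congr rfl fun i _ => key i]
  have : ∑ i, (star (hY.eigenvectorUnitary : Matrix m m ℂ) *
      (M * (hY.eigenvectorUnitary : Matrix m m ℂ))) i i
      = Matrix.trace (star (hY.eigenvectorUnitary : Matrix m m ℂ) *
        (M * (hY.eigenvectorUnitary : Matrix m m ℂ))) := rfl
  rw [this, Matrix.trace_mul_comm, Matrix.mul_assoc, h1, Matrix.mul_one]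

lemma trNorm_sub_le_of_psd {A B : Matrix m m ℂ} (hA : A.PosSemidef) (hB : B.PosSemidef) :
    trNorm (A - B) ≤ 1 / 2 * (A.trace.re + B.trace.re) := by
  have hY : (A - B).IsHermitian := hA.1.sub hB.1
  rw [trNorm_eq_sum_abs hY]
  set u : m → m → ℂ := fun i => ⇑(hY.eigenvectorBasis i) with hu
  have hbound : ∀ i, |hY.eigenvalues i| ≤
      (dotProduct (star (u i)) (A *ᵥ u i)).re + (dotProduct (star (u i)) (B *ᵥ u i)).re := by
    intro i
    have he := hY.eigenvalues_eq i
    have ha := hA.re_dotProduct_nonneg (u i)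
    have hb := hB.re_dotProduct_nonneg (u i)
    have hsplit : dotProduct (star (u i)) ((A - B) *ᵥ u i)
        = dotProduct (star (u i)) (A *ᵥ u i) - dotProduct (star (u i)) (B *ᵥ u i) := by
      rw [Matrix.sub_mulVec, dotProduct_sub]
    rw [he, hsplit]
    simp only [Complex.sub_re, RCLike.re_to_complex] at *
    calc |Complex.re (dotProduct (star (u i)) (A *ᵥ u i))
          - Complex.re (dotProduct (star (u i)) (B *ᵥ u i))|
        ≤ |Complex.re (dotProduct (star (u i)) (A *ᵥ u i))|
          + |Complex.re (dotProduct (star (u i)) (B *ᵥ u i))| := abs_sub _ _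
      _ = _ := by rw [abs_of_nonneg ha, abs_of_nonneg hb]
  have hsum : ∑ i, ((dotProduct (star (u i)) (A *ᵥ u i)).re
      + (dotProduct (star (u i)) (B *ᵥ u i)).re) = A.trace.re + B.trace.re := by
    rw [Finset.sum_add_distrib, ← Complex.re_sum, ← Complex.re_sum,
      sum_quadform_eq_trace hY A, sum_quadform_eq_trace hY B]
  have := Finset.sum_le_sum fun i (_ : i ∈ Finset.univ) => hbound i
  rw [hsum] at this
  linarith

section Kraus

variable {n : Type*} [Fintype n] [DecidableEq n] {ι : Type} {s : Finset ι}

lemma kraus_psd (K : ι → Matrix m n ℂ) {X : Matrix n n ℂ} (hX : X.PosSemidef) :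
    (∑ i ∈ s, K i * X * (K i)ᴴ).PosSemidef := by
  refine Finset.sum_induction _ _ (fun a b ha hb => ha.add hb) Matrix.PosSemidef.zero ?_
  exact fun i _ => hX.mul_mul_conjTranspose_same (K i)

lemma kraus_trace (K : ι → Matrix m n ℂ) (hsum : ∑ i ∈ s, (K i)ᴴ * K i = 1)
    (X : Matrix n n ℂ) : (∑ i ∈ s, K i * X * (K i)ᴴ).trace = X.trace := by
  have h : ∀ i ∈ s, (K i * X * (K i)ᴴ).trace = ((K i)ᴴ * (K i) * X).trace := by
    intro i _
    rw [Matrix.trace_mul_cycle, Matrix.mul_assoc]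
  rw [Matrix.trace_sum, Finset.sum_congr rfl h, ← Matrix.trace_sum, ← Finset.sum_mul, hsum,
    Matrix.one_mul]

end Kraus

lemma cptp_psd {n : Type*} [Fintype n] [DecidableEq n]
    (Λ : Matrix n n ℂ →ₗ[ℂ] Matrix m m ℂ) (hCPTP : IsCPTP Λ) {X : Matrix n n ℂ}
    (hX : X.PosSemidef) : (Λ X).PosSemidef := by
  obtain ⟨ι, s, K, hfor, hsum⟩ := hCPTP
  rw [hfor]
  exact kraus_psd K hX

lemma cptp_trace {n : Type*} [Fintype n] [DecidableEq n]
    (Λ : Matrix n n ℂ →ₗ[ℂ] Matrix m m ℂ) (hCPTP : IsCPTP Λ) (X : Matrix n n ℂ) :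
    (Λ X).trace = X.trace := by
  obtain ⟨ι, s, K, hfor, hsum⟩ := hCPTP
  rw [hfor]
  exact kraus_trace K hsum X

/-- CPTP maps are trace-norm contractions on Hermitian matrices. -/
lemma trNorm_cptp_le {n : Type*} [Fintype n] [DecidableEq n]
    (Λ : Matrix n n ℂ →ₗ[ℂ] Matrix m m ℂ) (hCPTP : IsCPTP Λ) {X : Matrix n n ℂ}
    (hX : X.IsHermitian) : trNorm (Λ X) ≤ trNorm X := by
  set P := conjU hX (fun i => max (hX.eigenvalues i) 0) with hPdef
  set N := conjU hX (fun i => max (-(hX.eigenvalues i)) 0) with hNdef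
  have hP : P.PosSemidef := conjU_posSemidef hX fun i => le_max_right _ _
  have hN : N.PosSemidef := conjU_posSemidef hX fun i => le_max_right _ _
  have hX_eq : X = P - N := by
    rw [hPdef, hNdef, conjU_sub]
    have : ((fun i => max (hX.eigenvalues i) 0) - fun i => max (-(hX.eigenvalues i)) 0)
        = hX.eigenvalues := by
      funext i
      simp only [Pi.sub_apply]
      rcases le_total 0 (hX.eigenvalues i) with h | h
      · rw [max_eq_left h, max_eq_right (neg_nonpos.mpr h), sub_zero]
      · rw [max_eq_right h, max_eq_left (neg_nonneg.mpr h), zero_sub, neg_neg]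
    rw [this]
    exact conjU_spectral hX
  have hmap : Λ X = Λ P - Λ N := by rw [hX_eq, map_sub]
  have hΛP := cptp_psd Λ hCPTP hP
  have hΛN := cptp_psd Λ hCPTP hN
  calc trNorm (Λ X) = trNorm (Λ P - Λ N) := by rw [hmap]
    _ ≤ 1 / 2 * ((Λ P).trace.re + (Λ N).trace.re) := trNorm_sub_le_of_psd hΛP hΛN
    _ = 1 / 2 * (P.trace.re + N.trace.re) := by
        rw [cptp_trace Λ hCPTP, cptp_trace Λ hCPTP]
    _ = 1 / 2 * ∑ i, |hX.eigenvalues i| := by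
        rw [hPdef, hNdef, conjU_trace, conjU_trace]
        simp only [Complex.ofReal_re]
        congr 1
        rw [← Finset.sum_add_distrib]
        refine Finset.sum_congr rfl fun i _ => ?_
        rcases le_total 0 (hX.eigenvalues i) with h | h
        · rw [max_eq_left h, max_eq_right (neg_nonpos.mpr h), add_zero, abs_of_nonneg h]
        · rw [max_eq_right h, max_eq_left (neg_nonneg.mpr h), zero_add, abs_of_nonpos h]
    _ = trNorm X := (trNorm_eq_sum_abs hX).symm

lemma pureProj_isHermitian (χ : m → ℂ) : (pureProj χ).IsHermitian := by
  ext i j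
  simp [pureProj, Matrix.vecMulVec_apply, Matrix.conjTranspose_apply, mul_comm]

lemma pureProj_mulVec (χ x : m → ℂ) : pureProj χ *ᵥ x = (star χ ⬝ᵥ x) • χ := by
  funext j
  simp only [pureProj, mulVec, dotProduct, Matrix.vecMulVec_apply, Pi.smul_apply,
    Pi.star_apply, smul_eq_mul, Finset.sum_mul, Finset.mul_sum]
  exact Finset.sum_congr rfl fun k _ => by ring

lemma star_dotProduct_comm (v x : m → ℂ) : star x ⬝ᵥ v = star (star v ⬝ᵥ x) := by
  simp only [dotProduct, star_sum, Pi.star_apply, star_mul', star_star]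
  exact Finset.sum_congr rfl fun k _ => by ring

lemma pureProj_posSemidef (χ : m → ℂ) : (pureProj χ).PosSemidef := by
  refine Matrix.PosSemidef.of_dotProduct_mulVec_nonneg (pureProj_isHermitian χ) fun x => ?_
  rw [pureProj_mulVec, dotProduct_smul, star_dotProduct_comm χ x, smul_eq_mul]
  exact mul_star_self_nonneg _

lemma pureProj_trace (χ : m → ℂ) : (pureProj χ).trace = star χ ⬝ᵥ χ := by
  simp only [Matrix.trace, Matrix.diag, pureProj, Matrix.vecMulVec_apply, dotProduct,
    Pi.star_apply]
  exact Finset.sum_congr rfl fun k _ => by ring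

lemma pureProj_mulVec_eq (ρ : Matrix m m ℂ) (hρ : ρ.IsHermitian) (v : m → ℂ) :
    pureProj (ρ *ᵥ v) = ρ * pureProj v * ρ := by
  rw [pureProj, pureProj, Matrix.vecMulVec_eq Unit, Matrix.vecMulVec_eq Unit,
    Matrix.replicateCol_mulVec, Matrix.star_mulVec, Matrix.replicateRow_vecMul]
  rw [← Matrix.mul_assoc, ← Matrix.mul_assoc, hρ.eq]

lemma posSemidef_smul {M : Matrix m m ℂ} (hM : M.PosSemidef) {c : ℂ} (hc : 0 ≤ c) :
    (c • M).PosSemidef := by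
  have him : c.im = 0 := by
    rw [Complex.le_def] at hc
    simpa using hc.2.symm
  have hcr : star c = c := by
    rw [Complex.star_def, Complex.conj_eq_iff_im]
    exact him
  refine Matrix.PosSemidef.of_dotProduct_mulVec_nonneg ?_ ?_
  · rw [Matrix.IsHermitian, Matrix.conjTranspose_smul, hcr, hM.1.eq]
  · intro x
    rw [Matrix.smul_mulVec, dotProduct_smul, smul_eq_mul]
    exact mul_nonneg hc (hM.dotProduct_mulVec_nonneg x)

lemma density_psd_sub_sq {ρ : Matrix m m ℂ} (hρ : IsDensity ρ) :
    (ρ - ρ * ρ).PosSemidef := by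
  have hH : ρ.IsHermitian := hρ.1.1
  have htr : ∑ i, hH.eigenvalues i = 1 := by
    have h1 := conjU_trace hH hH.eigenvalues
    rw [← conjU_spectral hH, hρ.2] at h1
    exact_mod_cast h1.symm
  have hnn : ∀ i, 0 ≤ hH.eigenvalues i := fun i => hρ.1.eigenvalues_nonneg i
  have hle1 : ∀ i, hH.eigenvalues i ≤ 1 := fun i => by
    rw [← htr]
    exact Finset.single_le_sum (fun j _ => hnn j) (Finset.mem_univ i)
  have hrw : ρ - ρ * ρ = conjU hH (hH.eigenvalues - hH.eigenvalues * hH.eigenvalues) := by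
    conv_lhs => rw [conjU_spectral hH]
    rw [conjU_mul, conjU_sub]
  rw [hrw]
  refine conjU_posSemidef hH fun i => ?_
  simp only [Pi.sub_apply, Pi.mul_apply]
  nlinarith [hnn i, hle1 i]

lemma posSemidef_smul_one_sub_pureProj (v : m → ℂ) :
    ((star v ⬝ᵥ v) • (1 : Matrix m m ℂ) - pureProj v).PosSemidef := by
  have hreal : star (star v ⬝ᵥ v) = star v ⬝ᵥ v := by
    rw [← star_dotProduct_comm v v]
  refine Matrix.PosSemidef.of_dotProduct_mulVec_nonneg ?_ ?_
  · refine Matrix.IsHermitian.sub ?_ (pureProj_isHermitian v)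
    rw [Matrix.IsHermitian, Matrix.conjTranspose_smul, Matrix.conjTranspose_one, hreal]
  · intro x
    rw [Matrix.sub_mulVec, dotProduct_sub, Matrix.smul_mulVec, dotProduct_smul,
      Matrix.one_mulVec, pureProj_mulVec, dotProduct_smul, star_dotProduct_comm v x]
    set d := star v ⬝ᵥ x with hd
    set v' : EuclideanSpace ℂ m := (WithLp.equiv 2 (m → ℂ)).symm v
    set x' : EuclideanSpace ℂ m := (WithLp.equiv 2 (m → ℂ)).symm x
    have hvv : star v ⬝ᵥ v = (‖v'‖ ^ 2 : ℝ) := by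
      have h1 : (inner ℂ v' v' : ℂ) = star v ⬝ᵥ v := by
        rw [EuclideanSpace.inner_eq_star_dotProduct, dotProduct_comm]; rfl
      rw [← h1, inner_self_eq_norm_sq_to_K]
      norm_cast
    have hxx : star x ⬝ᵥ x = (‖x'‖ ^ 2 : ℝ) := by
      have h1 : (inner ℂ x' x' : ℂ) = star x ⬝ᵥ x := by
        rw [EuclideanSpace.inner_eq_star_dotProduct, dotProduct_comm]; rfl
      rw [← h1, inner_self_eq_norm_sq_to_K]
      norm_cast
    have hdd : d * star d = ((‖d‖ ^ 2 : ℝ) : ℂ) := by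
      rw [Complex.star_def, Complex.mul_conj]
      norm_cast
      rw [← Complex.sq_norm]
    have hcs : ‖d‖ ≤ ‖v'‖ * ‖x'‖ := by
      have h1 : (inner ℂ v' x' : ℂ) = d := by
        rw [EuclideanSpace.inner_eq_star_dotProduct, dotProduct_comm]; rfl
      calc ‖d‖ = ‖(inner ℂ v' x' : ℂ)‖ := by rw [h1]
        _ ≤ ‖v'‖ * ‖x'‖ := norm_inner_le_norm v' x'
    rw [hvv, hxx, smul_eq_mul, smul_eq_mul, hdd]
    rw [← Complex.ofReal_mul, ← Complex.ofReal_sub, Complex.zero_le_real]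
    nlinarith [norm_nonneg d, norm_nonneg v', norm_nonneg x']

lemma psd_trace_nonneg {M : Matrix m m ℂ} (hM : M.PosSemidef) : 0 ≤ M.trace := by
  rw [Matrix.trace]
  refine Finset.sum_nonneg fun i _ => ?_
  have h := hM.dotProduct_mulVec_nonneg (Pi.single i 1)
  simpa [Matrix.diag, dotProduct, Pi.single_apply, apply_ite (star : ℂ → ℂ),
    Matrix.mulVec_single] using h

lemma eq_zero_of_trace_conjTranspose_mul_self {k l : Type*} [Fintype k] [Fintype l]
    {A : Matrix k l ℂ} (h : (Aᴴ * A).trace = 0) : A = 0 := by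
  have hre : (Aᴴ * A).trace = ((∑ j, ∑ i, Complex.normSq (A i j) : ℝ) : ℂ) := by
    rw [Matrix.trace]
    push_cast
    refine Finset.sum_congr rfl fun j _ => ?_
    rw [Matrix.diag_apply, Matrix.mul_apply]
    refine Finset.sum_congr rfl fun i _ => ?_
    rw [Matrix.conjTranspose_apply, Complex.normSq_eq_conj_mul_self]
    rfl
  rw [hre] at h
  norm_cast at h
  have hz := (Finset.sum_eq_zero_iff_of_nonneg
    (fun j _ => Finset.sum_nonneg fun i _ => Complex.normSq_nonneg _)).mp h
  ext i j
  have hz2 := (Finset.sum_eq_zero_iff_of_nonneg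
    (fun i _ => Complex.normSq_nonneg (A i j))).mp (hz j (Finset.mem_univ j)) i
    (Finset.mem_univ i)
  simpa using Complex.normSq_eq_zero.mp hz2

lemma pure_exists_vec {Q : Matrix m m ℂ} (hQ : IsPureState Q) :
    ∃ w, Q = pureProj w := by
  have hH : Q.IsHermitian := hQ.1.1.1
  have hidem : conjU hH (hH.eigenvalues * hH.eigenvalues) = conjU hH hH.eigenvalues := by
    rw [← conjU_mul, ← conjU_spectral hH, hQ.2]
  have heig : ∀ i, hH.eigenvalues i * hH.eigenvalues i = hH.eigenvalues i :=
    fun i => congrFun (conjU_injective hH hidem) i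
  have h01 : ∀ i, hH.eigenvalues i = 0 ∨ hH.eigenvalues i = 1 := by
    intro i
    have h := heig i
    have h2 : hH.eigenvalues i * (hH.eigenvalues i - 1) = 0 := by nlinarith
    rcases mul_eq_zero.mp h2 with h3 | h3
    · exact Or.inl h3
    · exact Or.inr (by linarith)
  have htr : ∑ i, hH.eigenvalues i = 1 := by
    have h1 := conjU_trace hH hH.eigenvalues
    rw [← conjU_spectral hH, hQ.1.2] at h1
    exact_mod_cast h1.symm
  obtain ⟨i₀, hi₀⟩ : ∃ i, hH.eigenvalues i = 1 := by
    by_contra h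
    push_neg at h
    have hzero : ∀ i, hH.eigenvalues i = 0 := fun i => (h01 i).resolve_right (h i)
    rw [Finset.sum_congr rfl fun i _ => hzero i] at htr
    simp at htr
  have hnn : ∀ i, 0 ≤ hH.eigenvalues i := fun i => hQ.1.1.eigenvalues_nonneg i
  have hdelta : hH.eigenvalues = fun i => if i = i₀ then 1 else 0 := by
    funext j
    by_cases hj : j = i₀
    · simp [hj, hi₀]
    · simp only [hj, if_false]
      rcases h01 j with h0 | h1
      · exact h0
      · exfalso
        have hpair : ∑ i ∈ ({i₀, j} : Finset m), hH.eigenvalues i = 2 := by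
          rw [Finset.sum_pair (fun hc => hj hc.symm)]
          rw [hi₀, h1]
          norm_num
        have h2 : (2 : ℝ) ≤ ∑ i, hH.eigenvalues i := by
          rw [← hpair]
          exact Finset.sum_le_sum_of_subset_of_nonneg (Finset.subset_univ _)
            (fun i _ _ => hnn i)
        rw [htr] at h2
        linarith
  refine ⟨fun j => (hH.eigenvectorUnitary : Matrix m m ℂ) j i₀, ?_⟩
  have hs := (conjU_spectral hH).trans (congrArg (conjU hH) hdelta)
  refine hs.trans ?_
  ext i j
  rw [conjU, Matrix.mul_apply]
  rw [Finset.sum_eq_single i₀]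
  · simp [Matrix.mul_diagonal, pureProj, Matrix.vecMulVec_apply, Matrix.star_apply]
  · intro l _ hl
    simp [Matrix.mul_diagonal, hl]
  · intro h
    exact absurd (Finset.mem_univ i₀) h

lemma pureProj_conj (w : m → ℂ) (M : Matrix m m ℂ) :
    pureProj w * M * pureProj w = (star w ⬝ᵥ (M *ᵥ w)) • pureProj w := by
  ext i j
  simp only [Matrix.mul_apply, pureProj, Matrix.vecMulVec_apply, Matrix.smul_apply,
    dotProduct, mulVec, Pi.star_apply, smul_eq_mul, Finset.sum_mul, Finset.mul_sum]
  rw [Finset.sum_comm]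
  refine Finset.sum_congr rfl fun a _ => ?_
  refine Finset.sum_congr rfl fun b _ => ?_
  ring

lemma psd_eq_pure_of_le {σ Q : Matrix m m ℂ} (hσ : σ.PosSemidef) (hσtr : σ.trace = 1)
    (hQ : IsPureState Q) {c : ℂ} (hle : (c • Q - σ).PosSemidef) : σ = Q := by
  obtain ⟨w, hw⟩ := pure_exists_vec hQ
  have hQH : Q.IsHermitian := hQ.1.1.1
  set R : Matrix m m ℂ := 1 - Q with hRdef
  have hRH : Rᴴ = R := by
    rw [hRdef, Matrix.conjTranspose_sub, Matrix.conjTranspose_one, hQH.eq]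
  have hRQ : R * Q = 0 := by
    rw [hRdef, Matrix.sub_mul, Matrix.one_mul, hQ.2, sub_self]
  have hN : (R * σ * Rᴴ).PosSemidef := hσ.mul_mul_conjTranspose_same R
  have hM : (R * (c • Q - σ) * Rᴴ).PosSemidef := hle.mul_mul_conjTranspose_same R
  have hMN : R * (c • Q - σ) * Rᴴ = -(R * σ * Rᴴ) := by
    rw [Matrix.mul_sub, Matrix.sub_mul, Matrix.mul_smul, hRQ, smul_zero, Matrix.zero_mul,
      zero_sub]
  have htr0 : (R * σ * Rᴴ).trace = 0 := by
    have h1 := psd_trace_nonneg hN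
    have h2 := psd_trace_nonneg hM
    rw [hMN, Matrix.trace_neg] at h2
    exact le_antisymm (neg_nonneg.mp h2) h1
  obtain ⟨B, hB⟩ : ∃ B : Matrix m m ℂ, σ = Bᴴ * B := by
    have hH := hσ.1
    refine ⟨conjU hH (fun i => Real.sqrt (hH.eigenvalues i)), ?_⟩
    rw [(conjU_posSemidef hH fun i => Real.sqrt_nonneg _).1.eq, conjU_mul]
    conv_lhs => rw [conjU_spectral hH]
    congr 1
    funext i
    simp only [Pi.mul_apply]
    exact (Real.mul_self_sqrt (hσ.eigenvalues_nonneg i)).symm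
  have hBR : B * R = 0 := by
    apply eq_zero_of_trace_conjTranspose_mul_self
    have heq : (B * R)ᴴ * (B * R) = R * σ * Rᴴ := by
      rw [Matrix.conjTranspose_mul, hB, hRH]
      simp only [Matrix.mul_assoc]
    rw [heq, htr0]
  have hσR : σ * R = 0 := by
    rw [hB, Matrix.mul_assoc, hBR, Matrix.mul_zero]
  have hσQ : σ * Q = σ := by
    have h := hσR
    rw [hRdef, Matrix.mul_sub, Matrix.mul_one, sub_eq_zero] at h
    exact h.symm
  have hQσ : Q * σ = σ := by
    have h := congrArg Matrix.conjTranspose hσR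
    rw [Matrix.conjTranspose_mul, hRH, hσ.1.eq, Matrix.conjTranspose_zero] at h
    rw [hRdef, Matrix.sub_mul, Matrix.one_mul, sub_eq_zero] at h
    exact h.symm
  have hQσQ : Q * σ * Q = σ := by rw [Matrix.mul_assoc, hσQ, hQσ]
  have hscalar : σ = (star w ⬝ᵥ (σ *ᵥ w)) • pureProj w := by
    conv_lhs => rw [← hQσQ]
    rw [hw, pureProj_conj]
  have htrQ : Q.trace = 1 := hQ.1.2
  have htrP : (pureProj w).trace = 1 := by rw [← hw]; exact htrQ
  have hone : star w ⬝ᵥ (σ *ᵥ w) = 1 := by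
    have := congrArg Matrix.trace hscalar
    rw [hσtr, Matrix.trace_smul, htrP, smul_eq_mul, mul_one] at this
    exact this.symm
  rw [hscalar, hone, one_smul, hw]

lemma output_eq {n : Type*} [Fintype n] [DecidableEq n]
    (Λ : Matrix n n ℂ →ₗ[ℂ] Matrix m m ℂ) (hCPTP : IsCPTP Λ) {ρ : Matrix n n ℂ}
    (hρ : IsDensity ρ) {χ : n → ℂ} (hr : inRange ρ χ) (hu : star χ ⬝ᵥ χ = 1)
    (hp : IsPureState (Λ ρ)) : Λ (pureProj χ) = Λ ρ := by
  obtain ⟨v, hv⟩ := hr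
  set c : ℂ := star v ⬝ᵥ v with hc
  have hc0 : 0 ≤ c := by
    rw [hc]
    exact Finset.sum_nonneg fun i _ => star_mul_self_nonneg _
  have hkey : (c • ρ - pureProj χ).PosSemidef := by
    have h1 : pureProj χ = ρ * pureProj v * ρ := by
      rw [← hv, pureProj_mulVec_eq ρ hρ.1.1 v]
    have h2 : (ρ * (c • (1 : Matrix n n ℂ) - pureProj v) * ρᴴ).PosSemidef :=
      (posSemidef_smul_one_sub_pureProj v).mul_mul_conjTranspose_same ρ
    have h3 : ρ * (c • (1 : Matrix n n ℂ) - pureProj v) * ρᴴ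
        = c • (ρ * ρ) - pureProj χ := by
      rw [hρ.1.1.eq, Matrix.mul_sub, Matrix.sub_mul, h1]
      congr 1
      rw [Matrix.mul_smul, Matrix.smul_mul, Matrix.mul_one]
    have h4 : (c • (ρ - ρ * ρ)).PosSemidef := posSemidef_smul (density_psd_sub_sq hρ) hc0
    have h5 : c • ρ - pureProj χ = c • (ρ - ρ * ρ) + (c • (ρ * ρ) - pureProj χ) := by
      rw [smul_sub]
      abel
    rw [h5]
    exact h4.add (h3 ▸ h2)
  have hσ : (Λ (pureProj χ)).PosSemidef := cptp_psd Λ hCPTP (pureProj_posSemidef χ)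
  have hσtr : (Λ (pureProj χ)).trace = 1 := by
    rw [cptp_trace Λ hCPTP, pureProj_trace, hu]
  have hle : (c • (Λ ρ) - Λ (pureProj χ)).PosSemidef := by
    have heq : c • (Λ ρ) - Λ (pureProj χ) = Λ (c • ρ - pureProj χ) := by
      rw [map_sub, LinearMap.map_smul]
    rw [heq]
    exact cptp_psd Λ hCPTP hkey
  exact psd_eq_pure_of_le hσ hσtr hp hle

lemma exists_unit_inRange {ρ : Matrix m m ℂ} (hρ : IsDensity ρ) :
    ∃ χ : m → ℂ, inRange ρ χ ∧ star χ ⬝ᵥ χ = 1 := by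
  have hne : ρ ≠ 0 := by
    intro h
    have h2 := hρ.2
    rw [h, Matrix.trace_zero] at h2
    exact one_ne_zero h2.symm
  obtain ⟨x, hx⟩ : ∃ x, ρ *ᵥ x ≠ 0 := by
    by_contra h
    push_neg at h
    apply hne
    ext i j
    have := congrFun (h (Pi.single j 1)) i
    simpa [Matrix.mulVec_single] using this
  set y := ρ *ᵥ x with hy
  have hediag : star y ⬝ᵥ y = ((∑ k, Complex.normSq (y k) : ℝ) : ℂ) := by
    rw [dotProduct]
    push_cast
    refine Finset.sum_congr rfl fun k _ => ?_
    rw [Pi.star_apply, Complex.star_def, ← Complex.normSq_eq_conj_mul_self]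
  set t : ℝ := ∑ k, Complex.normSq (y k) with ht
  have ht0 : 0 < t := by
    rcases (Finset.sum_nonneg fun k _ => Complex.normSq_nonneg (y k)).lt_or_eq with h | h
    · exact h
    · exfalso
      apply hx
      have hz := (Finset.sum_eq_zero_iff_of_nonneg
        fun k _ => Complex.normSq_nonneg (y k)).mp h.symm
      funext k
      exact Complex.normSq_eq_zero.mp (hz k (Finset.mem_univ k))
  refine ⟨((Real.sqrt t)⁻¹ : ℂ) • y, ⟨((Real.sqrt t)⁻¹ : ℂ) • x, ?_⟩, ?_⟩
  · rw [Matrix.mulVec_smul, ← hy]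
  · rw [star_smul, smul_dotProduct, dotProduct_smul, smul_eq_mul, smul_eq_mul, hediag]
    rw [Complex.star_def, map_inv₀, Complex.conj_ofReal]
    norm_cast
    rw [← mul_assoc, ← mul_inv, Real.mul_self_sqrt ht0.le, inv_mul_cancel₀ ht0.ne']

end QProof

/-- for a CPTP map with pure outputs on `ρ, ρ'`, the trace distance of
the outputs is bounded by the worst-case distinguishability of the inputs. -/
theorem pure_output_trace_distance_le_wcd {n m : Type*} [Fintype n] [DecidableEq n]
    [Fintype m] [DecidableEq m]
    (Λ : Matrix n n ℂ →ₗ[ℂ] Matrix m m ℂ) (hCPTP : IsCPTP Λ)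
    (ρ ρ' : Matrix n n ℂ) (hρ : IsDensity ρ) (hρ' : IsDensity ρ')
    (hp : IsPureState (Λ ρ)) (hp' : IsPureState (Λ ρ')) :
    trNorm (Λ ρ - Λ ρ') ≤ wcd ρ ρ' := by
  rw [wcd]
  refine le_csInf ?_ ?_
  · obtain ⟨χ, hr, hu⟩ := QProof.exists_unit_inRange hρ
    obtain ⟨χ', hr', hu'⟩ := QProof.exists_unit_inRange hρ'
    exact ⟨_, χ, χ', hr, hr', hu, hu', rfl⟩
  · rintro d ⟨χ, χ', hr, hr', hu, hu', rfl⟩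
    have e1 : Λ (pureProj χ) = Λ ρ := QProof.output_eq Λ hCPTP hρ hr hu hp
    have e2 : Λ (pureProj χ') = Λ ρ' := QProof.output_eq Λ hCPTP hρ' hr' hu' hp'
    have heq : Λ ρ - Λ ρ' = Λ (pureProj χ - pureProj χ') := by
      rw [map_sub, e1, e2]
    rw [heq]
    exact QProof.trNorm_cptp_le Λ hCPTP
      ((QProof.pureProj_isHermitian χ).sub (QProof.pureProj_isHermitian χ'))
end

section
/- All density operators in an essentially pure set have the same spectrum (with multiplicities). -/
open Matrix Kronecker BigOperators
open scoped ComplexOrder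

section EPAux

open Polynomial
open scoped NNReal

/-- The canonical ring hom `ℝ≥0 →+* ℂ`. -/
noncomputable def nnC : ℝ≥0 →+* ℂ := Complex.ofRealHom.comp NNReal.toRealHom

lemma nnC_injective : Function.Injective nnC := fun _ _ h =>
  NNReal.coe_injective (Complex.ofReal_injective h)

lemma EP.charpoly_diagonal {m : Type*} [Fintype m] [DecidableEq m] (d : m → ℂ) :
    (Matrix.diagonal d).charpoly = ∏ i, (X - C (d i)) := by
  have h : charmatrix (Matrix.diagonal d)
      = Matrix.diagonal (fun i => (X : ℂ[X]) - C (d i)) := by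
    ext i j
    by_cases hij : i = j
    · subst hij; simp
    · simp [charmatrix_apply_ne _ _ _ hij, Matrix.diagonal_apply_ne _ hij,
        Matrix.diagonal_apply_ne' _ hij]
  rw [Matrix.charpoly, h, Matrix.det_diagonal]

lemma EP.charpoly_unitary_conj {m : Type*} [Fintype m] [DecidableEq m]
    (U A : Matrix m m ℂ) (hU : U ∈ Matrix.unitaryGroup m ℂ) :
    (U * A * Uᴴ).charpoly = A.charpoly := by
  have h1 : U * Uᴴ = 1 := by
    simpa [Matrix.star_eq_conjTranspose] using Matrix.mem_unitaryGroup_iff.mp hU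
  have key : charmatrix (U * A * Uᴴ)
      = (U.map C) * charmatrix A * (Uᴴ.map C) := by
    have hmul : (U.map C) * (Uᴴ.map C) = 1 := by
      rw [← Matrix.map_mul, h1]
      exact Matrix.map_one _ (map_zero C) (map_one C)
    unfold charmatrix
    rw [Matrix.mul_sub, Matrix.sub_mul]
    congr 1
    · rw [Matrix.mul_assoc, (Matrix.scalar_commute (X : ℂ[X])
        (fun r' => Commute.all _ _) (Uᴴ.map C)).eq, ← Matrix.mul_assoc, hmul, Matrix.one_mul]
    · simp only [RingHom.mapMatrix_apply]
      rw [← Matrix.map_mul, ← Matrix.map_mul]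
  have hdet := congrArg Matrix.det key
  rw [Matrix.det_mul, Matrix.det_mul] at hdet
  have hdet1 : (U.map C).det * (Uᴴ.map C).det = 1 := by
    rw [← Matrix.det_mul, ← Matrix.map_mul, h1]
    rw [Matrix.map_one _ (map_zero C) (map_one C), Matrix.det_one]
  calc (U * A * Uᴴ).charpoly = (U.map C).det * (charmatrix A).det * (Uᴴ.map C).det := hdet
    _ = (charmatrix A).det * ((U.map C).det * (Uᴴ.map C).det) := by ring
    _ = A.charpoly := by rw [hdet1, mul_one]; rfl

lemma EP.charpoly_hermitian {m : Type*} [Fintype m] [DecidableEq m] {A : Matrix m m ℂ}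
    (hA : A.IsHermitian) :
    A.charpoly = ∏ i, (X - C ((hA.eigenvalues i : ℝ) : ℂ)) := by
  conv_lhs => rw [hA.spectral_theorem]
  rw [Unitary.conjStarAlgAut_apply, Matrix.star_eq_conjTranspose,
    EP.charpoly_unitary_conj _ _ (hA.eigenvectorUnitary).2, EP.charpoly_diagonal]
  rfl

/-- Builds an element of `ℝ≥0` (typed as `ℝ≥0`, not as the underlying subtype). -/
abbrev EP.nnmk (r : ℝ) (h : 0 ≤ r) : ℝ≥0 := ⟨r, h⟩

/-- The nonnegative spectrum, as a multiset, of a PSD matrix. -/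
noncomputable def specNN {m : Type*} [Fintype m] [DecidableEq m] {A : Matrix m m ℂ}
    (hA : A.PosSemidef) : Multiset ℝ≥0 :=
  Finset.univ.val.map (fun i => EP.nnmk (hA.1.eigenvalues i) (hA.eigenvalues_nonneg i))

lemma card_specNN {m : Type*} [Fintype m] [DecidableEq m] {A : Matrix m m ℂ}
    (hA : A.PosSemidef) : (specNN hA).card = Fintype.card m := by
  simp [specNN, Finset.card_univ]

lemma charpoly_eq_prod_specNN {m : Type*} [Fintype m] [DecidableEq m] {A : Matrix m m ℂ}
    (hA : A.PosSemidef) :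
    A.charpoly = ((specNN hA).map (fun r => X - C (nnC r))).prod := by
  rw [EP.charpoly_hermitian hA.1, specNN, Multiset.map_map, Finset.prod_eq_multiset_prod]
  rfl

lemma roots_charpoly_specNN {m : Type*} [Fintype m] [DecidableEq m] {A : Matrix m m ℂ}
    (hA : A.PosSemidef) :
    A.charpoly.roots = (specNN hA).map nnC := by
  rw [charpoly_eq_prod_specNN hA]
  have := Polynomial.roots_multiset_prod_X_sub_C ((specNN hA).map nnC)
  rw [Multiset.map_map] at this
  exact this

lemma EP.kron_conjTranspose {m m' b b' : Type*} (A : Matrix m m' ℂ) (B : Matrix b b' ℂ) :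
    (A ⊗ₖ B)ᴴ = Aᴴ ⊗ₖ Bᴴ := by
  ext ⟨i, k⟩ ⟨j, l⟩
  simp [Matrix.conjTranspose_apply, mul_comm]

lemma EP.kron_unitary {m b : Type*} [Fintype m] [DecidableEq m] [Fintype b] [DecidableEq b]
    {U1 : Matrix m m ℂ} {U2 : Matrix b b ℂ}
    (h1 : U1 ∈ Matrix.unitaryGroup m ℂ) (h2 : U2 ∈ Matrix.unitaryGroup b ℂ) :
    U1 ⊗ₖ U2 ∈ Matrix.unitaryGroup (m × b) ℂ := by
  rw [Matrix.mem_unitaryGroup_iff']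
  have e1 : (star U1) * U1 = 1 := Matrix.mem_unitaryGroup_iff'.mp h1
  have e2 : (star U2) * U2 = 1 := Matrix.mem_unitaryGroup_iff'.mp h2
  calc star (U1 ⊗ₖ U2) * (U1 ⊗ₖ U2)
      = (U1ᴴ ⊗ₖ U2ᴴ) * (U1 ⊗ₖ U2) := by
        rw [Matrix.star_eq_conjTranspose, EP.kron_conjTranspose]
    _ = (U1ᴴ * U1) ⊗ₖ (U2ᴴ * U2) := (Matrix.mul_kronecker_mul _ _ _ _).symm
    _ = (1 : Matrix m m ℂ) ⊗ₖ (1 : Matrix b b ℂ) := by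
        rw [← Matrix.star_eq_conjTranspose, ← Matrix.star_eq_conjTranspose, e1, e2]
    _ = 1 := Matrix.one_kronecker_one

lemma charpoly_kronecker_psd {m b : Type*} [Fintype m] [DecidableEq m] [Fintype b]
    [DecidableEq b] {A : Matrix m m ℂ} {B : Matrix b b ℂ}
    (hA : A.PosSemidef) (hB : B.PosSemidef) :
    (A ⊗ₖ B).charpoly = (((specNN hA).bind fun l => (specNN hB).map fun w => l * w).map
      (fun r => X - C (nnC r))).prod := by
  have hAeq := hA.1.spectral_theorem
  have hBeq := hB.1.spectral_theorem
  set U1 : Matrix m m ℂ := (hA.1.eigenvectorUnitary : Matrix m m ℂ) with hU1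
  set U2 : Matrix b b ℂ := (hB.1.eigenvectorUnitary : Matrix b b ℂ) with hU2
  set dA : m → ℂ := RCLike.ofReal ∘ hA.1.eigenvalues with hdA
  set dB : b → ℂ := RCLike.ofReal ∘ hB.1.eigenvalues with hdB
  have key : A ⊗ₖ B = (U1 ⊗ₖ U2) * (Matrix.diagonal fun ik : m × b => dA ik.1 * dB ik.2)
      * (U1 ⊗ₖ U2)ᴴ := by
    rw [← Matrix.diagonal_kronecker_diagonal, EP.kron_conjTranspose]
    rw [Unitary.conjStarAlgAut_apply, Matrix.star_eq_conjTranspose] at hAeq hBeq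
    conv_lhs => rw [hAeq, hBeq]
    rw [Matrix.mul_kronecker_mul, Matrix.mul_kronecker_mul]
  rw [key, EP.charpoly_unitary_conj _ _ (EP.kron_unitary (hA.1.eigenvectorUnitary).2
    (hB.1.eigenvectorUnitary).2), EP.charpoly_diagonal]
  rw [← Finset.univ_product_univ, Finset.prod_product]
  rw [specNN, specNN, Multiset.bind_map, Multiset.map_bind, Multiset.prod_bind,
    ← Finset.prod_eq_multiset_prod]
  apply Finset.prod_congr rfl
  intro i _
  rw [Multiset.map_map, Multiset.map_map, ← Finset.prod_eq_multiset_prod]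
  apply Finset.prod_congr rfl
  intro k _
  congr 2
  simp [nnC, hdA, hdB, Complex.ofRealHom]
  rfl

lemma roots_charpoly_kron {m b : Type*} [Fintype m] [DecidableEq m] [Fintype b]
    [DecidableEq b] {A : Matrix m m ℂ} {B : Matrix b b ℂ}
    (hA : A.PosSemidef) (hB : B.PosSemidef) :
    (A ⊗ₖ B).charpoly.roots
      = ((specNN hA).bind fun l => (specNN hB).map fun w => l * w).map nnC := by
  rw [charpoly_kronecker_psd hA hB]
  have := Polynomial.roots_multiset_prod_X_sub_C
    (((specNN hA).bind fun l => (specNN hB).map fun w => l * w).map nnC)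
  rw [Multiset.map_map] at this
  exact this

lemma EP.sup_mem {s : Multiset ℝ≥0} (h : s ≠ 0) : s.sup ∈ s := by
  induction s using Multiset.induction with
  | empty => exact absurd rfl h
  | cons a s ih =>
    rw [Multiset.sup_cons]
    rcases eq_or_ne s 0 with hs | hs
    · subst hs; simp
    · rcases le_total a s.sup with h' | h'
      · rw [sup_eq_right.2 h']; exact Multiset.mem_cons_of_mem (ih hs)
      · rw [sup_eq_left.2 h']; exact Multiset.mem_cons_self _ _

lemma EP.map_mul_sup (l : ℝ≥0) (s : Multiset ℝ≥0) :
    (s.map (fun w => l * w)).sup = l * s.sup := by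
  induction s using Multiset.induction with
  | empty => simp
  | cons a s ih =>
    rw [Multiset.map_cons, Multiset.sup_cons, Multiset.sup_cons, ih]
    rcases le_total a s.sup with h | h
    · rw [sup_eq_right.2 h, sup_eq_right.2 (mul_le_mul_right h l)]
    · rw [sup_eq_left.2 h, sup_eq_left.2 (mul_le_mul_right h l)]

lemma EP.sup_bind_mul (L W : Multiset ℝ≥0) :
    (L.bind (fun l => W.map (fun w => l * w))).sup = L.sup * W.sup := by
  induction L using Multiset.induction with
  | empty => simp
  | cons a L ih =>
    rw [Multiset.cons_bind, Multiset.sup_add, ih, Multiset.sup_cons, EP.map_mul_sup]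
    rcases le_total a L.sup with h | h
    · rw [sup_eq_right.2 h, sup_eq_right.2 (mul_le_mul_left h W.sup)]
    · rw [sup_eq_left.2 h, sup_eq_left.2 (mul_le_mul_left h W.sup)]

lemma EP.cancel_bind (W : Multiset ℝ≥0) (hW : W.sup ≠ 0) :
    ∀ (N : ℕ) (L L' : Multiset ℝ≥0), L.card = N → L'.card = N →
      L.bind (fun l => W.map (fun w => l * w)) = L'.bind (fun l => W.map (fun w => l * w)) →
      L = L' := by
  intro N
  induction N with
  | zero =>
    intro L L' h h' _
    rw [Multiset.card_eq_zero] at h h'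
    rw [h, h']
  | succ nn ih =>
    intro L L' hL hL' hb
    have hLne : L ≠ 0 := by
      intro h0; rw [h0] at hL; simp at hL
    have hL'ne : L' ≠ 0 := by
      intro h0; rw [h0] at hL'; simp at hL'
    have hsup : L.sup = L'.sup := by
      have h1 := congrArg Multiset.sup hb
      rw [EP.sup_bind_mul, EP.sup_bind_mul] at h1
      exact mul_right_cancel₀ hW h1
    have hm : L.sup ∈ L := EP.sup_mem hLne
    have hm' : L.sup ∈ L' := by rw [hsup]; exact EP.sup_mem hL'ne
    have hLe : L = L.sup ::ₘ L.erase L.sup := (Multiset.cons_erase hm).symm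
    have hL'e : L' = L.sup ::ₘ L'.erase L.sup := (Multiset.cons_erase hm').symm
    rw [hLe, hL'e, Multiset.cons_bind, Multiset.cons_bind] at hb
    have hb' := add_left_cancel hb
    have hcard : (L.erase L.sup).card = nn := by
      rw [Multiset.card_erase_of_mem hm, hL]; rfl
    have hcard' : (L'.erase L.sup).card = nn := by
      rw [Multiset.card_erase_of_mem hm', hL']; rfl
    rw [hLe, hL'e, ih _ _ hcard hcard' hb']

lemma EP.zero_one_sum (T : Multiset ℝ≥0) (h01 : ∀ x ∈ T, x = 0 ∨ x = 1) (hsum : T.sum = 1) :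
    T = 1 ::ₘ Multiset.replicate (T.card - 1) 0 := by
  induction T using Multiset.induction with
  | empty => simp at hsum
  | cons a T ih =>
    rcases h01 a (Multiset.mem_cons_self _ _) with ha | ha
    · subst ha
      have hTne : T ≠ 0 := by
        intro h0; rw [h0] at hsum; simp at hsum
      rw [Multiset.sum_cons, zero_add] at hsum
      have := ih (fun x hx => h01 x (Multiset.mem_cons_of_mem hx)) hsum
      rw [this, Multiset.cons_swap]
      congr 1
      have hc : 1 ≤ T.card := Multiset.card_pos.2 hTne
      rw [show ((0:ℝ≥0) ::ₘ Multiset.replicate (T.card - 1) 0)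
          = Multiset.replicate (T.card - 1 + 1) 0 by rw [Multiset.replicate_succ],
        Nat.sub_add_cancel hc]
      simp
    · subst ha
      rw [Multiset.sum_cons] at hsum
      have hT0 : T.sum = 0 := by
        have : (1:ℝ≥0) + T.sum = 1 + 0 := by rw [hsum, add_zero]
        exact add_left_cancel this
      have hall : ∀ x ∈ T, x = (0:ℝ≥0) := fun x hx =>
        (Multiset.sum_eq_zero_iff.mp hT0) x hx
      have : T = Multiset.replicate T.card 0 := Multiset.eq_replicate_card.2 hall
      rw [this]
      simp

lemma pureProj_posSemidef {m : Type*} [Fintype m] (φ : m → ℂ) :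
    (pureProj φ).PosSemidef := by
  rw [pureProj, Matrix.vecMulVec_eq Unit, ← Matrix.conjTranspose_replicateCol]
  exact Matrix.posSemidef_self_mul_conjTranspose _

lemma pureProj_idem {m : Type*} [Fintype m] (φ : m → ℂ) (hφ : star φ ⬝ᵥ φ = 1) :
    pureProj φ * pureProj φ = pureProj φ := by
  have hd : ∑ k, star (φ k) * φ k = 1 := hφ
  ext i j
  rw [Matrix.mul_apply]
  simp only [pureProj, Matrix.vecMulVec_apply, Pi.star_apply]
  calc ∑ k, (φ i * star (φ k)) * (φ k * star (φ j))
      = (φ i * star (φ j)) * ∑ k, star (φ k) * φ k := by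
        rw [Finset.mul_sum]; apply Finset.sum_congr rfl; intro k _; ring
    _ = φ i * star (φ j) := by rw [hd, mul_one]

lemma specNN_pureProj {m : Type*} [Fintype m] [DecidableEq m] (φ : m → ℂ)
    (hφ : star φ ⬝ᵥ φ = 1) :
    specNN (pureProj_posSemidef φ) = 1 ::ₘ Multiset.replicate (Fintype.card m - 1) 0 := by
  set hP := pureProj_posSemidef φ
  -- eigenvalues are 0 or 1
  have h01 : ∀ x ∈ specNN hP, x = 0 ∨ x = 1 := by
    intro x hx
    rw [specNN, Multiset.mem_map] at hx
    obtain ⟨i, _, rfl⟩ := hx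
    set U : Matrix m m ℂ := (hP.1.eigenvectorUnitary : Matrix m m ℂ) with hU
    set d : m → ℂ := RCLike.ofReal ∘ hP.1.eigenvalues with hd
    have hsp : pureProj φ = U * Matrix.diagonal d * star U := hP.1.spectral_theorem
    have hU1 : star U * U = 1 := Matrix.mem_unitaryGroup_iff'.mp (hP.1.eigenvectorUnitary).2
    have hkey : ∀ Y : Matrix m m ℂ, star U * (U * Y * star U) * U = Y := by
      intro Y
      simp only [← Matrix.mul_assoc]
      rw [hU1, Matrix.one_mul, Matrix.mul_assoc, hU1, Matrix.mul_one]
    have hDD : Matrix.diagonal d * Matrix.diagonal d = Matrix.diagonal d := by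
      have h2 : U * (Matrix.diagonal d * Matrix.diagonal d) * star U
          = U * Matrix.diagonal d * star U := by
        calc U * (Matrix.diagonal d * Matrix.diagonal d) * star U
            = (U * Matrix.diagonal d * star U) * (U * Matrix.diagonal d * star U) := by
              calc U * (Matrix.diagonal d * Matrix.diagonal d) * star U
                  = U * Matrix.diagonal d * ((star U * U) * (Matrix.diagonal d * star U)) := by
                    rw [hU1, Matrix.one_mul]; noncomm_ring
                _ = (U * Matrix.diagonal d * star U) * (U * Matrix.diagonal d * star U) := by
                    noncomm_ring
          _ = U * Matrix.diagonal d * star U := by rw [← hsp]; exact pureProj_idem φ hφ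
      have h3 := congrArg (fun Z => star U * Z * U) h2
      rw [hkey, hkey] at h3
      exact h3
    rw [Matrix.diagonal_mul_diagonal] at hDD
    have hdd := congrFun (Matrix.diagonal_injective hDD) i
    have hre : hP.1.eigenvalues i * hP.1.eigenvalues i = hP.1.eigenvalues i := by
      have : ((hP.1.eigenvalues i * hP.1.eigenvalues i : ℝ) : ℂ)
          = ((hP.1.eigenvalues i : ℝ) : ℂ) := by
        push_cast
        exact hdd
      exact_mod_cast this
    rcases mul_eq_zero.mp (by ring_nf; linarith [hre] :
        hP.1.eigenvalues i * (hP.1.eigenvalues i - 1) = 0) with h | h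
    · left; exact Subtype.ext h
    · right; exact Subtype.ext (by linarith [h] : hP.1.eigenvalues i = 1)
  -- sum of eigenvalues is 1
  have hsum : (specNN hP).sum = 1 := by
    apply nnC_injective
    rw [map_multiset_sum]
    have htr : (pureProj φ).trace = 1 := by
      rw [Matrix.trace]
      simp only [Matrix.diag_apply, pureProj, Matrix.vecMulVec_apply, Pi.star_apply]
      calc ∑ i, φ i * star (φ i) = ∑ i, star (φ i) * φ i := by
            apply Finset.sum_congr rfl; intro i _; ring
        _ = 1 := hφ
    have hroots := Matrix.trace_eq_sum_roots_charpoly (pureProj φ)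
    rw [roots_charpoly_specNN hP] at hroots
    rw [← hroots, htr]
    simp [nnC]
  have := EP.zero_one_sum _ h01 hsum
  rw [card_specNN] at this
  exact this

end EPAux

/-- all density operators in an essentially pure set have the same
spectrum with multiplicities (equal characteristic polynomials). -/
theorem essentially_pure_same_spectrum
    {n a p b : Type*} [Fintype n] [DecidableEq n] [Fintype a] [DecidableEq a]
    [Fintype p] [Fintype b]
    (M : Set (Matrix n n ℂ)) (hM : ∀ ρ ∈ M, IsDensity ρ)
    (e : n × a ≃ p × b) (ω : Matrix a a ℂ) (σB : Matrix b b ℂ)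
    (U : Matrix (n × a) (n × a) ℂ)
    (hω : IsDensity ω) (hσ : IsDensity σB)
    (hU : U ∈ Matrix.unitaryGroup (n × a) ℂ)
    (hEP : ∀ ρ ∈ M, ∃ φ : p → ℂ, star φ ⬝ᵥ φ = 1 ∧
      ρ ⊗ₖ ω = U * ((pureProj φ ⊗ₖ σB).submatrix e e) * Uᴴ) :
    ∀ ρi ∈ M, ∀ ρj ∈ M, ρi.charpoly = ρj.charpoly := by
  classical
  intro ρi hρi ρj hρj
  obtain ⟨φi, hφi1, hφi2⟩ := hEP ρi hρi
  obtain ⟨φj, hφj1, hφj2⟩ := hEP ρj hρj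
  have hPi := hM ρi hρi
  have hPj := hM ρj hρj
  -- charpoly of submatrix by an equiv
  have hsub : ∀ X : Matrix (p × b) (p × b) ℂ, (X.submatrix e e).charpoly = X.charpoly := by
    intro X
    have h1 : X.submatrix e e = Matrix.reindex e.symm e.symm X := by
      rw [Matrix.reindex_apply]; simp
    rw [h1, Matrix.charpoly_reindex]
  -- step 1: the big systems have equal charpoly
  have hbig : (ρi ⊗ₖ ω).charpoly = (ρj ⊗ₖ ω).charpoly := by
    rw [hφi2, hφj2, EP.charpoly_unitary_conj _ _ hU, EP.charpoly_unitary_conj _ _ hU,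
      hsub, hsub, charpoly_kronecker_psd (pureProj_posSemidef φi) hσ.1,
      charpoly_kronecker_psd (pureProj_posSemidef φj) hσ.1,
      specNN_pureProj φi hφi1, specNN_pureProj φj hφj1]
  -- step 2: extract multiset equality of eigenvalue products
  have hroots : ((specNN hPi.1).bind fun l => (specNN hω.1).map fun w => l * w).map nnC
      = ((specNN hPj.1).bind fun l => (specNN hω.1).map fun w => l * w).map nnC := by
    rw [← roots_charpoly_kron hPi.1 hω.1, ← roots_charpoly_kron hPj.1 hω.1, hbig]
  have hbind := Multiset.map_injective nnC_injective hroots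
  -- step 3: the auxiliary spectrum has nonzero sup
  have hWsup : (specNN hω.1).sup ≠ 0 := by
    intro h0
    have hzero : ∀ i, hω.1.1.eigenvalues i = 0 := by
      intro i
      have hmem : EP.nnmk (hω.1.1.eigenvalues i) (hω.1.eigenvalues_nonneg i) ∈ specNN hω.1 := by
        rw [specNN, Multiset.mem_map]
        exact ⟨i, by simp, rfl⟩
      have := le_antisymm (h0 ▸ Multiset.le_sup hmem) zero_le
      exact congrArg NNReal.toReal this
    have hω0 : ω = 0 := by
      have hsp := hω.1.1.spectral_theorem
      have : Matrix.diagonal (RCLike.ofReal ∘ hω.1.1.eigenvalues) = (0 : Matrix a a ℂ) := by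
        have : (RCLike.ofReal ∘ hω.1.1.eigenvalues : a → ℂ) = fun _ => 0 := by
          funext i; simp [hzero i]
        rw [this, Matrix.diagonal_zero]
      rw [hsp, Unitary.conjStarAlgAut_apply, this, Matrix.mul_zero, Matrix.zero_mul]
    have : (1 : ℂ) = 0 := by rw [← hω.2, hω0, Matrix.trace_zero]
    exact one_ne_zero this
  -- step 4: cancel
  have hspec := EP.cancel_bind (specNN hω.1) hWsup (Fintype.card n)
    (specNN hPi.1) (specNN hPj.1) (card_specNN _) (card_specNN _) hbind
  rw [charpoly_eq_prod_specNN hPi.1, charpoly_eq_prod_specNN hPj.1, hspec]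
end
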